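/- (Exact PTC rigidity on the full-measure case) Let α, β, γ be independent random variables on finite sets and a(β,γ), b(α,γ), c(α,β) Boolean functions with a ⊕ b ⊕ c = 1 holding with probability 1. Then, restricting to values of α, β, γ of positive probability, there exist Boolean token functions t_α, t_β, t_γ such that a(β,γ) = t_β ⊕ t_γ ⊕ 1, b(α,γ) = t_α ⊕ t_γ ⊕ 1, and c(α,β) = t_α ⊕ t_β ⊕ 1 for all such values. -/
import Mathlib

set_option synthInstance.maxSize 1000 in
set_option synthInstance.maxHeartbeats 1000000 in
lemma stmt_3_aux : ∀ (x1 x2 x3 x4 y1 y2 z1 z2 : ZMod 2),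
    x1 + y1 + z1 = 1 → x2 + y2 + z1 = 1 → x3 + y1 + z2 = 1 → x4 + y2 + z2 = 1 →
    x1 = x2 + (x3 + x4 + 1) + 1 ∧ y1 = y2 + (x3 + x4 + 1) + 1 ∧ z1 = y2 + x2 + 1 := by
  decide

/-- Exact PTC rigidity: if independent full-support sources `α, β, γ` and Boolean response
functions satisfy the parity condition `a ⊕ b ⊕ c = 1` everywhere, then there exist Boolean
token functions `t_α, t_β, t_γ` with `a(β,γ) = t_β ⊕ t_γ ⊕ 1`, `b(α,γ) = t_α ⊕ t_γ ⊕ 1` and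
`c(α,β) = t_α ⊕ t_β ⊕ 1` for all values. -/
theorem stmt_3 {A B C : Type*} [Fintype A] [Fintype B] [Fintype C]
    (pα : A → ℝ) (pβ : B → ℝ) (pγ : C → ℝ)
    (hα0 : ∀ x, 0 < pα x) (hα1 : ∑ x, pα x = 1)
    (hβ0 : ∀ x, 0 < pβ x) (hβ1 : ∑ x, pβ x = 1)
    (hγ0 : ∀ x, 0 < pγ x) (hγ1 : ∑ x, pγ x = 1)
    (a : B → C → ZMod 2) (b : A → C → ZMod 2) (c : A → B → ZMod 2)
    (hparity : ∀ (α : A) (β : B) (γ : C), a β γ + b α γ + c α β = 1) :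
    ∃ (tα : A → ZMod 2) (tβ : B → ZMod 2) (tγ : C → ZMod 2),
      ∀ (α : A) (β : B) (γ : C),
        a β γ = tβ β + tγ γ + 1 ∧
        b α γ = tα α + tγ γ + 1 ∧
        c α β = tα α + tβ β + 1 := by
  obtain hB | hB := isEmpty_or_nonempty B
  · exact ⟨fun _ => 0, fun _ => 0, fun _ => 0, fun _ β => (hB.false β).elim⟩
  obtain hC | hC := isEmpty_or_nonempty C
  · exact ⟨fun _ => 0, fun _ => 0, fun _ => 0, fun _ _ γ => (hC.false γ).elim⟩
  obtain ⟨β₀⟩ := hB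
  obtain ⟨γ₀⟩ := hC
  refine ⟨fun α => b α γ₀, fun β => a β γ₀, fun γ => a β₀ γ + a β₀ γ₀ + 1, fun α β γ => ?_⟩
  exact stmt_3_aux (a β γ) (a β γ₀) (a β₀ γ) (a β₀ γ₀) (b α γ) (b α γ₀) (c α β) (c α β₀)
    (hparity α β γ) (hparity α β γ₀) (hparity α β₀ γ) (hparity α β₀ γ₀)
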